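/- Let n be an odd positive integer. The matrices B̃(d,ℓ), as d ranges over divisors of n with n | d² and ℓ ranges over residues modulo d²/n with ℓ² ≡ 1 (mod d²/n), are pairwise distinct and linearly independent over ℂ. -/

import Mathlib

open Complex

/-- The 0-1 matrix `B̃(d,ℓ)` indexed by `ℤ/nℤ`:
entry `(a,b)` is `1` iff `n ∣ d·a` and `b ≡ a·ℓ (mod d)`. -/
noncomputable def Btilde (n d : ℕ) (ℓ : ℤ) : Matrix (ZMod n) (ZMod n) ℂ :=
  fun a b => if n ∣ d * a.val ∧ (d : ℤ) ∣ ((b.val : ℤ) - (a.val : ℤ) * ℓ) then 1 else 0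

/-- Index set: pairs `(d,ℓ)` with `d ∣ n`, `n ∣ d²`, and `ℓ` a residue mod `d²/n`
with `ℓ² ≡ 1 (mod d²/n)`. -/
def BIndex (n : ℕ) : Type :=
  {p : ℕ × ℤ // p.1 ∣ n ∧ n ∣ p.1 ^ 2 ∧ 0 ≤ p.2 ∧ p.2 < ((p.1 ^ 2 / n : ℕ) : ℤ) ∧
    p.2 ^ 2 ≡ 1 [ZMOD ((p.1 ^ 2 / n : ℕ) : ℤ)]}

/-- Solvability of the quadratic congruence used in the Hensel-type lifting step. -/
lemma step_exists_t (p : ℕ) (hp : p.Prime) (hp2 : p ≠ 2) (n' k ℓ : ℤ)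
    (hnk : ℓ ^ 2 - 1 = n' * k) : ∃ t : ℤ, (p : ℤ) ∣ n' * t ^ 2 + 2 * ℓ * t + k := by
  haveI : Fact p.Prime := ⟨hp⟩
  have h2 : (2 : ZMod p) ≠ 0 := by
    have h : ¬ ((2 : ℕ) : ZMod p) = 0 := by
      rw [ZMod.natCast_eq_zero_iff]
      intro h
      exact hp2 ((Nat.prime_dvd_prime_iff_eq hp Nat.prime_two).mp h)
    simpa using h
  suffices h : ∃ τ : ZMod p, (n' : ZMod p) * τ ^ 2 + 2 * (ℓ : ZMod p) * τ + (k : ZMod p) = 0 by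
    obtain ⟨τ, hτ⟩ := h
    refine ⟨(τ.val : ℤ), ?_⟩
    rw [← ZMod.intCast_zmod_eq_zero_iff_dvd]
    push_cast
    rw [ZMod.natCast_val, ZMod.cast_id]
    exact hτ
  have hnk' : (n' : ZMod p) * (k : ZMod p) = (ℓ : ZMod p) ^ 2 - 1 := by
    have h := congrArg (fun z : ℤ => (z : ZMod p)) hnk
    push_cast at h
    exact h.symm
  by_cases hN : (n' : ZMod p) = 0
  · have hL2 : (ℓ : ZMod p) ^ 2 = 1 := by
      have h := hnk'
      rw [hN, zero_mul] at h
      linear_combination -h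
    have hL : (ℓ : ZMod p) ≠ 0 := by
      intro h
      rw [h] at hL2
      simp at hL2
    refine ⟨-(k : ZMod p) * (2 * (ℓ : ZMod p))⁻¹, ?_⟩
    rw [hN]
    field_simp
    ring
  · refine ⟨(1 - (ℓ : ZMod p)) * ((n' : ZMod p))⁻¹, ?_⟩
    field_simp
    linear_combination hnk'

/-- Square roots of 1 modulo a divisor `e` of an odd number `n` lift to square
roots of 1 modulo `n`. -/
lemma sqrt_lift : ∀ n : ℕ, Odd n → ∀ e : ℕ, e ∣ n → ∀ ℓ : ℤ,
    (e : ℤ) ∣ ℓ ^ 2 - 1 → ∃ ℓ₀ : ℤ, (e : ℤ) ∣ ℓ₀ - ℓ ∧ (n : ℤ) ∣ ℓ₀ ^ 2 - 1 := by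
  intro n
  induction n using Nat.strong_induction_on with
  | _ n ih =>
    intro hodd e he ℓ hl
    by_cases hen : e = n
    · exact ⟨ℓ, by simp, hen ▸ hl⟩
    · have hn0 : n ≠ 0 := by
        rintro rfl
        simp [Nat.odd_iff] at hodd
      obtain ⟨c, hc⟩ := he
      have hc1 : c ≠ 1 := by
        rintro rfl
        rw [mul_one] at hc
        exact hen hc.symm
      obtain ⟨p, hp, hpc⟩ := Nat.exists_prime_and_dvd hc1
      obtain ⟨c', hc'⟩ := hpc
      have hn' : p * (e * c') = n := by rw [hc, hc']; ring
      have hodd' : Odd p ∧ Odd (e * c') := Nat.odd_mul.mp (hn' ▸ hodd)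
      have hp2 : p ≠ 2 := by
        rintro rfl
        exact (by decide : ¬ Odd 2) hodd'.1
      have hn'0 : e * c' ≠ 0 := by
        intro h
        rw [h, mul_zero] at hn'
        exact hn0 hn'.symm
      have hlt : e * c' < n := by
        calc e * c' < 2 * (e * c') := by omega
        _ ≤ p * (e * c') := Nat.mul_le_mul_right _ hp.two_le
        _ = n := hn'
      obtain ⟨ℓ₀', h1, h2⟩ := ih (e * c') hlt hodd'.2 e (Dvd.intro c' rfl) ℓ hl
      obtain ⟨k, hk⟩ := h2
      obtain ⟨t, ht⟩ := step_exists_t p hp hp2 ((e * c' : ℕ) : ℤ) k ℓ₀' hk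
      obtain ⟨u, hu⟩ := ht
      refine ⟨ℓ₀' + t * ((e * c' : ℕ) : ℤ), ?_, ?_⟩
      · have hen' : (e : ℤ) ∣ ((e * c' : ℕ) : ℤ) := by
          push_cast
          exact Dvd.intro _ rfl
        have heq : ℓ₀' + t * ((e * c' : ℕ) : ℤ) - ℓ = (ℓ₀' - ℓ) + t * ((e * c' : ℕ) : ℤ) := by
          ring
        rw [heq]
        exact dvd_add h1 (Dvd.dvd.mul_left hen' t)
      · refine ⟨u, ?_⟩
        have hn'' : (n : ℤ) = (p : ℤ) * ((e * c' : ℕ) : ℤ) := by exact_mod_cast hn'.symm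
        rw [hn'']
        linear_combination hk + ((e * c' : ℕ) : ℤ) * hu

/-- A helper: to prove coprimality to `n` it is enough to exclude common prime factors. -/
lemma isCoprime_int_of_forall_prime (z : ℤ) (n : ℕ)
    (h : ∀ p : ℕ, p.Prime → (p : ℤ) ∣ z → p ∣ n → False) : IsCoprime z (n : ℤ) := by
  rw [Int.isCoprime_iff_gcd_eq_one]
  by_contra hg
  obtain ⟨p, hp, hpd⟩ := Nat.exists_prime_and_dvd hg
  have h1 : p ∣ z.natAbs := hpd.trans (Nat.gcd_dvd_left _ _)
  have h2 : p ∣ (n : ℤ).natAbs := hpd.trans (Nat.gcd_dvd_right _ _)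
  refine h p hp ?_ ?_
  · exact Int.dvd_natAbs.mp (Int.natCast_dvd_natCast.mpr h1)
  · simpa using h2

/-- Existence of the auxiliary multiplier `m`. -/
lemma exists_m (n : ℕ) (hodd : Odd n) (e : ℕ) (ℓ₀ : ℤ) (hco : IsCoprime ℓ₀ (n : ℤ)) :
    ∃ m : ℤ, IsCoprime m (n : ℤ) ∧ IsCoprime (2 * ℓ₀ + m * (e : ℤ)) (n : ℤ) := by
  set Φ := n.totient with hΦdef
  set E : ℤ := (e : ℤ) ^ Φ with hEdef
  set y : ℤ := (e : ℤ) ^ (Φ - 1) with hydef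
  have hn0 : n ≠ 0 := by rintro rfl; simp [Nat.odd_iff] at hodd
  have hΦ0 : Φ ≠ 0 := (Nat.totient_pos.mpr (Nat.pos_of_ne_zero hn0)).ne'
  have main : ∀ p : ℕ, p.Prime → p ∣ n →
      (ℓ₀ : ZMod p) ≠ 0 ∧ (2 : ZMod p) ≠ 0 := by
    intro p hp hpn
    haveI : Fact p.Prime := ⟨hp⟩
    have hp2 : p ≠ 2 := by
      rintro rfl
      rw [Nat.odd_iff] at hodd
      omega
    constructor
    · intro h
      obtain ⟨u, v, huv⟩ := hco
      have hz := congrArg (fun z : ℤ => (z : ZMod p)) huv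
      push_cast at hz
      rw [h, mul_zero, (ZMod.natCast_eq_zero_iff n p).mpr hpn, mul_zero,
        add_zero] at hz
      exact zero_ne_one hz
    · have h : ¬ ((2 : ℕ) : ZMod p) = 0 := by
        rw [ZMod.natCast_eq_zero_iff]
        intro h
        exact hp2 ((Nat.prime_dvd_prime_iff_eq hp Nat.prime_two).mp h)
      simpa using h
  have epow : ∀ p : ℕ, p.Prime → p ∣ n → (hinst : Fact p.Prime) → ((e : ℕ) : ZMod p) ≠ 0 →
      ((e : ZMod p) ^ Φ = 1 ∧ (e : ZMod p) ^ (Φ - 1) * (e : ZMod p) = 1) := by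
    intro p hp hpn hinst he
    have h1 : (e : ZMod p) ^ (p - 1) = 1 := ZMod.pow_card_sub_one_eq_one he
    have hdvd : (p - 1) ∣ Φ := by
      rw [hΦdef, ← Nat.totient_prime hp]
      exact Nat.totient_dvd_of_dvd hpn
    obtain ⟨c, hcc⟩ := hdvd
    have hE1 : (e : ZMod p) ^ Φ = 1 := by rw [hcc, pow_mul, h1, one_pow]
    refine ⟨hE1, ?_⟩
    rw [← pow_succ, Nat.sub_add_cancel (Nat.one_le_iff_ne_zero.mpr hΦ0), hE1]
  refine ⟨ℓ₀ * (1 - E - 4 * y * E), ?_, ?_⟩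
  · apply isCoprime_int_of_forall_prime
    intro p hp hz hpn
    haveI hinst : Fact p.Prime := ⟨hp⟩
    obtain ⟨hL, h2⟩ := main p hp hpn
    have hz0 : ((ℓ₀ * (1 - E - 4 * y * E) : ℤ) : ZMod p) = 0 :=
      (ZMod.intCast_zmod_eq_zero_iff_dvd _ p).mpr hz
    rw [hEdef, hydef] at hz0
    push_cast at hz0
    by_cases he : ((e : ℕ) : ZMod p) = 0
    · rw [he, zero_pow hΦ0] at hz0
      simp at hz0
      tauto
    · obtain ⟨hE1, hy1⟩ := epow p hp hpn hinst he
      rw [hE1] at hz0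
      have h4 : (4 : ZMod p) ≠ 0 := by
        have h44 : (4 : ZMod p) = 2 * 2 := by norm_num
        rw [h44]
        exact mul_ne_zero h2 h2
      have hy0 : (e : ZMod p) ^ (Φ - 1) ≠ 0 := pow_ne_zero _ he
      have heq : (ℓ₀ : ZMod p) * (1 - 1 - 4 * (e : ZMod p) ^ (Φ - 1) * 1) =
          -(ℓ₀ * (4 * (e : ZMod p) ^ (Φ - 1))) := by ring
      rw [heq] at hz0
      have hz1 := neg_eq_zero.mp hz0
      rcases mul_eq_zero.mp hz1 with h | h
      · exact hL h
      · rcases mul_eq_zero.mp h with h | h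
        · exact h4 h
        · exact hy0 h
  · apply isCoprime_int_of_forall_prime
    intro p hp hz hpn
    haveI hinst : Fact p.Prime := ⟨hp⟩
    obtain ⟨hL, h2⟩ := main p hp hpn
    have hz0 : ((2 * ℓ₀ + ℓ₀ * (1 - E - 4 * y * E) * (e : ℤ) : ℤ) : ZMod p) = 0 :=
      (ZMod.intCast_zmod_eq_zero_iff_dvd _ p).mpr hz
    rw [hEdef, hydef] at hz0
    push_cast at hz0
    by_cases he : ((e : ℕ) : ZMod p) = 0
    · rw [he] at hz0
      simp at hz0
      rcases hz0 with h | h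
      · exact h2 h
      · exact hL h
    · obtain ⟨hE1, hy1⟩ := epow p hp hpn hinst he
      rw [hE1] at hz0
      have hcalc : 2 * (ℓ₀ : ZMod p) + (ℓ₀ : ZMod p) * (1 - 1 - 4 * (e : ZMod p) ^ (Φ - 1) * 1)
          * (e : ZMod p) = -(2 * ℓ₀) := by
        have heq : (ℓ₀ : ZMod p) * (1 - 1 - 4 * (e : ZMod p) ^ (Φ - 1) * 1) * (e : ZMod p)
            = -(4 * ℓ₀) * ((e : ZMod p) ^ (Φ - 1) * (e : ZMod p)) := by ring
        rw [heq, hy1]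
        ring
      rw [hcalc] at hz0
      have hz1 := neg_eq_zero.mp hz0
      rcases mul_eq_zero.mp hz1 with h | h
      · exact h2 h
      · exact hL h

/-- Key combinatorial lemma: each `B̃(d,ℓ)` has an entry equal to `1` at which every
other matrix of the family vanishes. -/
lemma Btilde_key (n : ℕ) [NeZero n] (hodd : Odd n) (p : BIndex n) :
    ∃ a b : ZMod n, Btilde n p.1.1 p.1.2 a b = 1 ∧
      ∀ q : BIndex n, Btilde n q.1.1 q.1.2 a b ≠ 0 → q = p := by
  obtain ⟨⟨d, ℓ⟩, hprop⟩ := p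
  have hd : d ∣ n := hprop.1
  have hnd : n ∣ d ^ 2 := hprop.2.1
  have hl0 : 0 ≤ ℓ := hprop.2.2.1
  have hl1 : ℓ < ((d ^ 2 / n : ℕ) : ℤ) := hprop.2.2.2.1
  have hl2 : ℓ ^ 2 ≡ 1 [ZMOD ((d ^ 2 / n : ℕ) : ℤ)] := hprop.2.2.2.2
  have hnpos : 0 < n := Nat.pos_of_ne_zero (NeZero.ne n)
  have hdpos : 0 < d := by
    rcases Nat.eq_zero_or_pos d with h | h
    · exfalso; subst h; exact hnpos.ne' (Nat.eq_zero_of_zero_dvd hd)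
    · exact h
  set A := n / d with hAdef
  set e := d ^ 2 / n with hedef
  have hdA : d * A = n := Nat.mul_div_cancel' hd
  have hen : e * n = d ^ 2 := Nat.div_mul_cancel hnd
  have hApos : 0 < A := Nat.div_pos (Nat.le_of_dvd hnpos hd) hdpos
  have hAe : A * e = d := by
    apply Nat.eq_of_mul_eq_mul_right hnpos
    calc A * e * n = A * (e * n) := by ring
    _ = A * d ^ 2 := by rw [hen]
    _ = d * (d * A) := by ring
    _ = d * n := by rw [hdA]
  have hepos : 0 < e := by
    rcases Nat.eq_zero_or_pos e with h | h
    · rw [h, zero_mul] at hen; exact absurd hen.symm (by positivity)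
    · exact h
  have hednat : e ∣ n := dvd_trans ⟨A, by rw [← hAe]; ring⟩ hd
  have hl2' : (e : ℤ) ∣ ℓ ^ 2 - 1 := hl2.symm.dvd
  obtain ⟨ℓ₀, hLl, hL2⟩ := sqrt_lift n hodd e hednat ℓ hl2'
  have hcoL : IsCoprime ℓ₀ (n : ℤ) := by
    obtain ⟨k0, hk0⟩ := hL2
    exact ⟨ℓ₀, -k0, by linear_combination hk0⟩
  obtain ⟨m, hm1, hm2⟩ := exists_m n hodd e ℓ₀ hcoL
  set x := ℓ₀ + m * (e : ℤ) with hxdef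
  set a : ZMod n := ((A : ℕ) : ZMod n) with hadef
  set b : ZMod n := (((A : ℤ) * x : ℤ) : ZMod n) with hbdef
  have hav : ∃ s : ℤ, (a.val : ℤ) = (A : ℤ) + (n : ℤ) * s := by
    have h := ZMod.val_natCast (n := n) A
    refine ⟨-((A : ℤ) / n), ?_⟩
    rw [hadef, h]
    push_cast
    rw [Int.emod_def]
    ring
  have hbv : ∃ r : ℤ, (b.val : ℤ) = (A : ℤ) * x + (n : ℤ) * r := by
    have h := ZMod.val_intCast (n := n) ((A : ℤ) * x)
    refine ⟨-(((A : ℤ) * x) / n), ?_⟩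
    rw [hbdef, h, Int.emod_def]
    ring
  obtain ⟨s, hs⟩ := hav
  obtain ⟨r, hr⟩ := hbv
  have hxl : ∃ c : ℤ, x - ℓ = (e : ℤ) * c := by
    obtain ⟨c0, hc0⟩ := hLl
    exact ⟨c0 + m, by rw [hxdef]; linear_combination hc0⟩
  obtain ⟨c, hc⟩ := hxl
  have hdA' : (d : ℤ) * (A : ℤ) = (n : ℤ) := by exact_mod_cast hdA
  have hAe' : (A : ℤ) * (e : ℤ) = (d : ℤ) := by exact_mod_cast hAe
  refine ⟨a, b, ?_, ?_⟩
  · -- the entry is 1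
    show (if n ∣ d * a.val ∧ (d : ℤ) ∣ ((b.val : ℤ) - (a.val : ℤ) * ℓ) then (1:ℂ) else 0) = 1
    rw [if_pos]
    constructor
    · have h1 : a.val = A % n := ZMod.val_natCast n A
      rw [h1]
      have h2 : d * (A % n) ≡ d * A [MOD n] := (Nat.mod_modEq A n).mul_left d
      have h3 : d * A ≡ 0 [MOD n] := by
        rw [hdA]
        exact (Nat.modEq_zero_iff_dvd).mpr dvd_rfl
      exact (Nat.modEq_zero_iff_dvd).mp (h2.trans h3)
    · refine ⟨(A : ℤ) * r + c - (A : ℤ) * s * ℓ, ?_⟩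
      rw [hr, hs]
      linear_combination (A : ℤ) * hc + (s * ℓ - r) * hdA' + c * hAe'
  · rintro ⟨⟨d', ℓ'⟩, hprop'⟩ hq
    have hd' : d' ∣ n := hprop'.1
    have hnd' : n ∣ d' ^ 2 := hprop'.2.1
    have hl0' : 0 ≤ ℓ' := hprop'.2.2.1
    have hl1' : ℓ' < ((d' ^ 2 / n : ℕ) : ℤ) := hprop'.2.2.2.1
    have hl2'q : ℓ' ^ 2 ≡ 1 [ZMOD ((d' ^ 2 / n : ℕ) : ℤ)] := hprop'.2.2.2.2
    have hq' : (if n ∣ d' * a.val ∧ (d' : ℤ) ∣ ((b.val : ℤ) - (a.val : ℤ) * ℓ')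
        then (1:ℂ) else 0) ≠ 0 := hq
    by_cases hcond : n ∣ d' * a.val ∧ (d' : ℤ) ∣ ((b.val : ℤ) - (a.val : ℤ) * ℓ')
    swap
    · rw [if_neg hcond] at hq'; exact absurd rfl hq'
    obtain ⟨h1, h2⟩ := hcond
    -- d ∣ d'
    have hdd' : d ∣ d' := by
      have hv : a.val = A % n := ZMod.val_natCast n A
      have hmod : d' * A ≡ 0 [MOD n] := by
        calc d' * A ≡ d' * (A % n) [MOD n] := ((Nat.mod_modEq A n).mul_left d').symm
        _ = d' * a.val := by rw [hv]
        _ ≡ 0 [MOD n] := (Nat.modEq_zero_iff_dvd).mpr h1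
      have hnda : n ∣ d' * A := (Nat.modEq_zero_iff_dvd).mp hmod
      rw [← hdA] at hnda
      exact (Nat.mul_dvd_mul_iff_right hApos).mp hnda
    obtain ⟨t, hdt⟩ : ∃ t : ℕ, d * t = d' := ⟨d' / d, Nat.mul_div_cancel' hdd'⟩
    have htA : t ∣ A := by
      apply Nat.dvd_of_mul_dvd_mul_left hdpos
      rw [hdt, hdA]
      exact hd'
    have he' : d' ^ 2 / n = e * t ^ 2 := by
      have hsq : d' ^ 2 = (e * t ^ 2) * n := by
        rw [← hdt]
        calc (d * t) ^ 2 = d ^ 2 * t ^ 2 := by ring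
        _ = (e * n) * t ^ 2 := by rw [hen]
        _ = (e * t ^ 2) * n := by ring
      rw [hsq, Nat.mul_div_cancel _ hnpos]
    have h3 : (d' : ℤ) ∣ (A : ℤ) * (x - ℓ') := by
      have hd'n : (d' : ℤ) ∣ (n : ℤ) := Int.natCast_dvd_natCast.mpr hd'
      have heq : (A : ℤ) * (x - ℓ') =
          ((b.val : ℤ) - (a.val : ℤ) * ℓ') - (n : ℤ) * r + (n : ℤ) * (s * ℓ') := by
        rw [hr, hs]; ring
      rw [heq]
      exact dvd_add (dvd_sub h2 (hd'n.mul_right r)) (hd'n.mul_right (s * ℓ'))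
    have h4 : (e : ℤ) * (t : ℤ) ∣ x - ℓ' := by
      have hfac : (d' : ℤ) = (A : ℤ) * ((e : ℤ) * (t : ℤ)) := by
        rw [← hdt]
        push_cast
        linear_combination (-(t : ℤ)) * hAe'
      rw [hfac] at h3
      have hA0 : (A : ℤ) ≠ 0 := by exact_mod_cast hApos.ne'
      exact (mul_dvd_mul_iff_left hA0).mp h3
    have h5 : (e : ℤ) * (t : ℤ) ∣ ℓ' ^ 2 - 1 := by
      have hdl : (e : ℤ) * (t : ℤ) ∣ ((d' ^ 2 / n : ℕ) : ℤ) := by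
        refine ⟨(t : ℤ), ?_⟩
        rw [he']
        push_cast
        ring
      exact hdl.trans hl2'q.symm.dvd
    have h6 : (e : ℤ) * (t : ℤ) ∣ x ^ 2 - 1 := by
      have heq : x ^ 2 - 1 = (x - ℓ') * (x + ℓ') + (ℓ' ^ 2 - 1) := by ring
      rw [heq]
      exact dvd_add (h4.mul_right _) h5
    have hetn : (e : ℤ) * (t : ℤ) ∣ (n : ℤ) := by
      have hnat : e * t ∣ n := by
        have h := Nat.mul_dvd_mul_left e htA
        rw [show e * A = d by rw [← hAe]; ring] at h
        exact h.trans hd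
      exact_mod_cast Int.natCast_dvd_natCast.mpr hnat
    have h7 : (e : ℤ) * (t : ℤ) ∣ (e : ℤ) * (m * (2 * ℓ₀ + m * (e : ℤ))) := by
      have heq : (e : ℤ) * (m * (2 * ℓ₀ + m * (e : ℤ))) = (x ^ 2 - 1) - (ℓ₀ ^ 2 - 1) := by
        rw [hxdef]; ring
      rw [heq]
      exact dvd_sub h6 (hetn.trans hL2)
    have h8 : (t : ℤ) ∣ m * (2 * ℓ₀ + m * (e : ℤ)) := by
      have he0 : (e : ℤ) ≠ 0 := by exact_mod_cast hepos.ne'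
      exact (mul_dvd_mul_iff_left he0).mp h7
    have htn : (t : ℤ) ∣ (n : ℤ) :=
      Int.natCast_dvd_natCast.mpr ((htA.trans ⟨d, by rw [← hdA]; ring⟩))
    have h9 : (t : ℤ) ∣ 2 * ℓ₀ + m * (e : ℤ) := by
      have hco_tm : IsCoprime ((t : ℕ) : ℤ) m := (hm1.of_isCoprime_of_dvd_right htn).symm
      exact hco_tm.dvd_of_dvd_mul_left h8
    have h10 : IsUnit ((t : ℕ) : ℤ) := hm2.isUnit_of_dvd' h9 htn
    have ht1 : t = 1 := by
      have htnn : (0 : ℤ) ≤ (t : ℕ) := Int.natCast_nonneg t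
      rcases Int.isUnit_iff.mp h10 with h | h <;> omega
    have hd'd : d' = d := by rw [← hdt, ht1, mul_one]
    have hexl' : (e : ℤ) ∣ x - ℓ' := by
      have h := h4
      rw [ht1] at h
      simpa using h
    have hdiff : (e : ℤ) ∣ ℓ - ℓ' := by
      have h := dvd_sub hexl' (⟨c, hc⟩ : (e : ℤ) ∣ x - ℓ)
      have heq : x - ℓ' - (x - ℓ) = ℓ - ℓ' := by ring
      rwa [heq] at h
    have hbound : ℓ' < (e : ℤ) := by
      have heq : ((d' ^ 2 / n : ℕ) : ℤ) = (e : ℤ) := by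
        rw [he', ht1]
        push_cast
        ring
      rwa [heq] at hl1'
    have hll' : ℓ - ℓ' = 0 := by
      apply Int.eq_zero_of_abs_lt_dvd hdiff
      rw [abs_lt]
      constructor
      · linarith
      · linarith
    have hl'ℓ : ℓ' = ℓ := by linarith
    exact Subtype.ext (by rw [Prod.ext_iff]; exact ⟨hd'd, hl'ℓ⟩)

/-- The matrices `B̃(d,ℓ)` are pairwise distinct and linearly independent over `ℂ`. -/
theorem Btilde_linearIndependent (n : ℕ) [NeZero n] (hodd : Odd n) (hpos : 0 < n) :
    Function.Injective (fun p : BIndex n => Btilde n p.1.1 p.1.2) ∧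
    LinearIndependent ℂ (fun p : BIndex n => Btilde n p.1.1 p.1.2) := by
  have hli : LinearIndependent ℂ (fun p : BIndex n => Btilde n p.1.1 p.1.2) := by
    rw [linearIndependent_iff']
    intro s g hsum i hi
    obtain ⟨a, b, h1, h2⟩ := Btilde_key n hodd i
    have h := congrFun (congrFun hsum a) b
    simp only [Matrix.sum_apply, Matrix.smul_apply, smul_eq_mul, Matrix.zero_apply] at h
    have h' : ∑ j ∈ s, g j * Btilde n j.1.1 j.1.2 a b = 0 := h
    rw [Finset.sum_eq_single i] at h'
    · rw [h1, mul_one] at h'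
      exact h'
    · intro j hj hji
      by_cases hB : Btilde n j.1.1 j.1.2 a b = 0
      · rw [hB, mul_zero]
      · exact absurd (h2 j hB) hji
    · intro h''
      exact absurd hi h''
  exact ⟨hli.injective, hli⟩
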